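/- Polyhedral rotation groups do not act on coplanar point sets: for every nonzero vector v ∈ ℝ³, the orbit G_tet·v = {A·v : A ∈ G_tet} is not contained in any affine subspace of ℝ³ of dimension at most 2 (i.e., the orbit is not coplanar). -/

import Mathlib

open Matrix

/-- A 3×3 real matrix is a rotation if it is orthogonal with determinant 1. -/
def IsRotation (A : Matrix (Fin 3) (Fin 3) ℝ) : Prop := Aᵀ * A = 1 ∧ A.det = 1

/-- The action of a 3×3 matrix on ℝ³ by matrix–vector multiplication. -/
noncomputable def act (A : Matrix (Fin 3) (Fin 3) ℝ) (v : EuclideanSpace ℝ (Fin 3)) :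
    EuclideanSpace ℝ (Fin 3) := WithLp.toLp 2 (A.mulVec v)

/-- The orbit of a point under a set of matrices. -/
def orb (G : Set (Matrix (Fin 3) (Fin 3) ℝ)) (v : EuclideanSpace ℝ (Fin 3)) :
    Set (EuclideanSpace ℝ (Fin 3)) := {q | ∃ A ∈ G, act A v = q}

/-- The vertices of a regular tetrahedron inscribed in the cube [−1,1]³. -/
noncomputable def Vtet : Set (EuclideanSpace ℝ (Fin 3)) :=
  {!₂[1, 1, 1], !₂[1, -1, -1], !₂[-1, 1, -1], !₂[-1, -1, 1]}

/-- The tetrahedral rotation group: all rotations preserving `Vtet` setwise. -/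
noncomputable def Gtet : Set (Matrix (Fin 3) (Fin 3) ℝ) :=
  {A | IsRotation A ∧ act A '' Vtet = Vtet}

/-! ### Auxiliary material -/

def Dm1 : Matrix (Fin 3) (Fin 3) ℝ := !![1,0,0;0,-1,0;0,0,-1]
def Dm2 : Matrix (Fin 3) (Fin 3) ℝ := !![-1,0,0;0,1,0;0,0,-1]
def Dm3 : Matrix (Fin 3) (Fin 3) ℝ := !![-1,0,0;0,-1,0;0,0,1]
def Pm : Matrix (Fin 3) (Fin 3) ℝ := !![0,1,0;0,0,1;1,0,0]

lemma act_apply (A : Matrix (Fin 3) (Fin 3) ℝ) (x : EuclideanSpace ℝ (Fin 3)) :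
    act A x = !₂[A 0 0 * x 0 + A 0 1 * x 1 + A 0 2 * x 2,
                A 1 0 * x 0 + A 1 1 * x 1 + A 1 2 * x 2,
                A 2 0 * x 0 + A 2 1 * x 1 + A 2 2 * x 2] := by
  ext i
  fin_cases i <;>
    simp [act, Matrix.mulVec, dotProduct, Fin.sum_univ_three]

lemma actD1 (x : EuclideanSpace ℝ (Fin 3)) : act Dm1 x = !₂[x 0, -x 1, -x 2] := by
  rw [act_apply]; norm_num [Dm1, Matrix.vecHead, Matrix.vecTail, Matrix.cons_val_two, Matrix.tail_cons]
lemma actD2 (x : EuclideanSpace ℝ (Fin 3)) : act Dm2 x = !₂[-x 0, x 1, -x 2] := by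
  rw [act_apply]; norm_num [Dm2, Matrix.vecHead, Matrix.vecTail, Matrix.cons_val_two, Matrix.tail_cons]
lemma actD3 (x : EuclideanSpace ℝ (Fin 3)) : act Dm3 x = !₂[-x 0, -x 1, x 2] := by
  rw [act_apply]; norm_num [Dm3, Matrix.vecHead, Matrix.vecTail, Matrix.cons_val_two, Matrix.tail_cons]
lemma actP (x : EuclideanSpace ℝ (Fin 3)) : act Pm x = !₂[x 1, x 2, x 0] := by
  rw [act_apply]; norm_num [Pm, Matrix.vecHead, Matrix.vecTail, Matrix.cons_val_two, Matrix.tail_cons]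

lemma act_mul (A B : Matrix (Fin 3) (Fin 3) ℝ) (x : EuclideanSpace ℝ (Fin 3)) :
    act (A * B) x = act A (act B x) := by
  simp [act, Matrix.mulVec_mulVec]

lemma Dm1_mem : Dm1 ∈ Gtet := by
  refine ⟨⟨?_, ?_⟩, ?_⟩
  · ext i j; fin_cases i <;> fin_cases j <;>
      norm_num [Dm1, Matrix.mul_apply, Fin.sum_univ_three, Matrix.one_apply, Fin.ext_iff,
        Matrix.vecHead, Matrix.vecTail, Matrix.cons_val_two, Matrix.tail_cons]
  · norm_num [Dm1, Matrix.det_fin_three, Matrix.cons_val_two, Matrix.tail_cons]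
  · show act Dm1 '' {!₂[1, 1, 1], !₂[1, -1, -1], !₂[-1, 1, -1], !₂[-1, -1, 1]} = _
    rw [Set.image_insert_eq, Set.image_insert_eq, Set.image_insert_eq, Set.image_singleton,
      actD1, actD1, actD1, actD1]
    norm_num [Matrix.vecHead, Matrix.vecTail, Matrix.cons_val_two, Matrix.tail_cons]
    ext x
    constructor <;> intro hx <;>
      simp only [Set.mem_insert_iff, Set.mem_singleton_iff, Vtet] at hx ⊢ <;> tauto

lemma Dm2_mem : Dm2 ∈ Gtet := by
  refine ⟨⟨?_, ?_⟩, ?_⟩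
  · ext i j; fin_cases i <;> fin_cases j <;>
      norm_num [Dm2, Matrix.mul_apply, Fin.sum_univ_three, Matrix.one_apply, Fin.ext_iff,
        Matrix.vecHead, Matrix.vecTail, Matrix.cons_val_two, Matrix.tail_cons]
  · norm_num [Dm2, Matrix.det_fin_three, Matrix.cons_val_two, Matrix.tail_cons]
  · show act Dm2 '' {!₂[1, 1, 1], !₂[1, -1, -1], !₂[-1, 1, -1], !₂[-1, -1, 1]} = _
    rw [Set.image_insert_eq, Set.image_insert_eq, Set.image_insert_eq, Set.image_singleton,
      actD2, actD2, actD2, actD2]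
    norm_num [Matrix.vecHead, Matrix.vecTail, Matrix.cons_val_two, Matrix.tail_cons]
    ext x
    constructor <;> intro hx <;>
      simp only [Set.mem_insert_iff, Set.mem_singleton_iff, Vtet] at hx ⊢ <;> tauto

lemma Dm3_mem : Dm3 ∈ Gtet := by
  refine ⟨⟨?_, ?_⟩, ?_⟩
  · ext i j; fin_cases i <;> fin_cases j <;>
      norm_num [Dm3, Matrix.mul_apply, Fin.sum_univ_three, Matrix.one_apply, Fin.ext_iff,
        Matrix.vecHead, Matrix.vecTail, Matrix.cons_val_two, Matrix.tail_cons]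
  · norm_num [Dm3, Matrix.det_fin_three, Matrix.cons_val_two, Matrix.tail_cons]
  · show act Dm3 '' {!₂[1, 1, 1], !₂[1, -1, -1], !₂[-1, 1, -1], !₂[-1, -1, 1]} = _
    rw [Set.image_insert_eq, Set.image_insert_eq, Set.image_insert_eq, Set.image_singleton,
      actD3, actD3, actD3, actD3]
    norm_num [Matrix.vecHead, Matrix.vecTail, Matrix.cons_val_two, Matrix.tail_cons]
    ext x
    constructor <;> intro hx <;>
      simp only [Set.mem_insert_iff, Set.mem_singleton_iff, Vtet] at hx ⊢ <;> tauto

lemma Pm_mem : Pm ∈ Gtet := by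
  refine ⟨⟨?_, ?_⟩, ?_⟩
  · ext i j; fin_cases i <;> fin_cases j <;>
      norm_num [Pm, Matrix.mul_apply, Fin.sum_univ_three, Matrix.one_apply, Fin.ext_iff,
        Matrix.vecHead, Matrix.vecTail, Matrix.cons_val_two, Matrix.tail_cons]
  · norm_num [Pm, Matrix.det_fin_three, Matrix.cons_val_two, Matrix.tail_cons]
  · show act Pm '' {!₂[1, 1, 1], !₂[1, -1, -1], !₂[-1, 1, -1], !₂[-1, -1, 1]} = _
    rw [Set.image_insert_eq, Set.image_insert_eq, Set.image_insert_eq, Set.image_singleton,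
      actP, actP, actP, actP]
    norm_num [Matrix.vecHead, Matrix.vecTail, Matrix.cons_val_two, Matrix.tail_cons]
    ext x
    constructor <;> intro hx <;>
      simp only [Set.mem_insert_iff, Set.mem_singleton_iff, Vtet] at hx ⊢ <;> tauto

lemma one_mem_Gtet : (1 : Matrix (Fin 3) (Fin 3) ℝ) ∈ Gtet := by
  refine ⟨⟨by simp, by simp⟩, ?_⟩
  have : act (1 : Matrix (Fin 3) (Fin 3) ℝ) = id := by
    funext x; simp [act, Matrix.one_mulVec]
  rw [this, Set.image_id]

lemma mul_mem_Gtet {A B : Matrix (Fin 3) (Fin 3) ℝ} (hA : A ∈ Gtet) (hB : B ∈ Gtet) :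
    A * B ∈ Gtet := by
  obtain ⟨⟨hA1, hA2⟩, hA3⟩ := hA
  obtain ⟨⟨hB1, hB2⟩, hB3⟩ := hB
  refine ⟨⟨?_, ?_⟩, ?_⟩
  · rw [Matrix.transpose_mul, mul_assoc, ← mul_assoc Aᵀ, hA1, one_mul, hB1]
  · rw [Matrix.det_mul, hA2, hB2, one_mul]
  · have : act (A * B) = act A ∘ act B := by
      funext x; exact act_mul A B x
    rw [this, Set.image_comp, hB3, hA3]

/-- Key lemma: if the orbit lies in `s` then the three "axis components" of any
orbit point lie in the direction of `s`. -/
lemma key (s : AffineSubspace ℝ (EuclideanSpace ℝ (Fin 3))) (v : EuclideanSpace ℝ (Fin 3))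
    (hs : orb Gtet v ⊆ (s : Set (EuclideanSpace ℝ (Fin 3))))
    {A : Matrix (Fin 3) (Fin 3) ℝ} (hA : A ∈ Gtet) :
    (!₂[(act A v) 0, 0, 0] : EuclideanSpace ℝ (Fin 3)) ∈ s.direction ∧
    (!₂[0, (act A v) 1, 0] : EuclideanSpace ℝ (Fin 3)) ∈ s.direction ∧
    (!₂[0, 0, (act A v) 2] : EuclideanSpace ℝ (Fin 3)) ∈ s.direction := by
  set w : EuclideanSpace ℝ (Fin 3) := act A v with hw
  have hp : w ∈ s := hs ⟨A, hA, rfl⟩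
  have h1 : act Dm1 w ∈ s := by
    refine hs ⟨Dm1 * A, mul_mem_Gtet Dm1_mem hA, ?_⟩
    rw [act_mul]
  have h2 : act Dm2 w ∈ s := by
    refine hs ⟨Dm2 * A, mul_mem_Gtet Dm2_mem hA, ?_⟩
    rw [act_mul]
  have h3 : act Dm3 w ∈ s := by
    refine hs ⟨Dm3 * A, mul_mem_Gtet Dm3_mem hA, ?_⟩
    rw [act_mul]
  have d1 : act Dm1 w - w ∈ s.direction := AffineSubspace.vsub_mem_direction h1 hp
  have d2 : act Dm2 w - w ∈ s.direction := AffineSubspace.vsub_mem_direction h2 hp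
  have d3 : act Dm3 w - w ∈ s.direction := AffineSubspace.vsub_mem_direction h3 hp
  refine ⟨?_, ?_, ?_⟩
  · have heq : (!₂[w 0, 0, 0] : EuclideanSpace ℝ (Fin 3)) =
        (-(1:ℝ)/4) • ((act Dm2 w - w) + (act Dm3 w - w) - (act Dm1 w - w)) := by
      rw [actD1, actD2, actD3]
      ext i; fin_cases i <;>
        simp [PiLp.add_apply, PiLp.sub_apply, PiLp.smul_apply] <;> ring
    rw [heq]
    exact Submodule.smul_mem _ _ (sub_mem (add_mem d2 d3) d1)
  · have heq : (!₂[0, w 1, 0] : EuclideanSpace ℝ (Fin 3)) =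
        (-(1:ℝ)/4) • ((act Dm1 w - w) + (act Dm3 w - w) - (act Dm2 w - w)) := by
      rw [actD1, actD2, actD3]
      ext i; fin_cases i <;>
        simp [PiLp.add_apply, PiLp.sub_apply, PiLp.smul_apply] <;> ring
    rw [heq]
    exact Submodule.smul_mem _ _ (sub_mem (add_mem d1 d3) d2)
  · have heq : (!₂[0, 0, w 2] : EuclideanSpace ℝ (Fin 3)) =
        (-(1:ℝ)/4) • ((act Dm1 w - w) + (act Dm2 w - w) - (act Dm3 w - w)) := by
      rw [actD1, actD2, actD3]
      ext i; fin_cases i <;>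
        simp [PiLp.add_apply, PiLp.sub_apply, PiLp.smul_apply] <;> ring
    rw [heq]
    exact Submodule.smul_mem _ _ (sub_mem (add_mem d1 d2) d3)

/-- The orbit of a nonzero vector under the tetrahedral rotation group is never
coplanar: it is not contained in any affine subspace of dimension at most 2. -/
theorem tetrahedral_orbit_not_coplanar (v : EuclideanSpace ℝ (Fin 3)) (hv : v ≠ 0) :
    ¬ ∃ s : AffineSubspace ℝ (EuclideanSpace ℝ (Fin 3)),
        Module.finrank ℝ s.direction ≤ 2 ∧
        orb Gtet v ⊆ (s : Set (EuclideanSpace ℝ (Fin 3))) := by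
  rintro ⟨s, hdim, hsub⟩
  obtain ⟨i, hi⟩ : ∃ i, v i ≠ 0 := by
    by_contra h
    push_neg at h
    exact hv (PiLp.ext fun i => h i)
  -- orbit points coordinates
  have hv1 : act (1 : Matrix (Fin 3) (Fin 3) ℝ) v = v := by
    simp [act, Matrix.one_mulVec]
  have hvP : act Pm v = !₂[v 1, v 2, v 0] := actP v
  have hvPP : act (Pm * Pm) v = !₂[v 2, v 0, v 1] := by
    rw [act_mul, actP, actP]; rfl
  have k1 := key s v hsub one_mem_Gtet
  have k2 := key s v hsub Pm_mem
  have k3 := key s v hsub (mul_mem_Gtet Pm_mem Pm_mem)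
  rw [hv1] at k1
  rw [hvP] at k2
  rw [hvPP] at k3
  simp only [Matrix.cons_val_zero, Matrix.cons_val_one, Matrix.head_cons,
    Matrix.cons_val_two, Matrix.tail_cons] at k2 k3
  -- for t = v i, the vectors t•e₀, t•e₁, t•e₂ are all in the direction
  have h0 : (!₂[v i, 0, 0] : EuclideanSpace ℝ (Fin 3)) ∈ s.direction := by
    fin_cases i
    · exact k1.1
    · exact k2.1
    · exact k3.1
  have h1 : (!₂[0, v i, 0] : EuclideanSpace ℝ (Fin 3)) ∈ s.direction := by
    fin_cases i
    · exact k3.2.1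
    · exact k1.2.1
    · exact k2.2.1
  have h2 : (!₂[0, 0, v i] : EuclideanSpace ℝ (Fin 3)) ∈ s.direction := by
    fin_cases i
    · exact k2.2.2
    · exact k3.2.2
    · exact k1.2.2
  have htop : s.direction = ⊤ := by
    rw [Submodule.eq_top_iff']
    intro x
    have hx : x = (x 0 / v i) • (!₂[v i, 0, 0] : EuclideanSpace ℝ (Fin 3)) +
        (x 1 / v i) • (!₂[0, v i, 0] : EuclideanSpace ℝ (Fin 3)) +
        (x 2 / v i) • (!₂[0, 0, v i] : EuclideanSpace ℝ (Fin 3)) := by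
      ext j
      fin_cases j <;>
        simp [PiLp.add_apply, PiLp.smul_apply] <;> field_simp
    rw [hx]
    exact add_mem (add_mem (Submodule.smul_mem _ _ h0) (Submodule.smul_mem _ _ h1))
      (Submodule.smul_mem _ _ h2)
  rw [htop, finrank_top, finrank_euclideanSpace_fin] at hdim
  omega
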